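/- For every nonzero rational number r, the real number e^r (the exponential of r) is irrational. -/

import Mathlib

open Polynomial intervalIntegral
open scoped Nat

-- FTC identity
lemma hermite_integral_eq (F : ℝ[X]) (t : ℝ) :
    ∫ x in (0:ℝ)..t, Real.exp (-x) * F.eval x =
      (sumIDeriv F).eval 0 - Real.exp (-t) * (sumIDeriv F).eval t := by
  have key : ∀ x : ℝ, HasDerivAt (fun y => -(Real.exp (-y) * (sumIDeriv F).eval y))
      (Real.exp (-x) * F.eval x) x := by
    intro x
    have h1 : HasDerivAt (fun y : ℝ => Real.exp (-y)) (-Real.exp (-x)) x := by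
      simpa using (hasDerivAt_neg x).exp
    have h2 := (sumIDeriv F).hasDerivAt x
    have := (h1.mul h2).neg
    refine this.congr_deriv ?_
    have hF : F = sumIDeriv F - sumIDeriv (derivative F) := by
      rw [sumIDeriv_eq_self_add F, sumIDeriv_derivative]; ring
    have hx : F.eval x = (sumIDeriv F).eval x - (sumIDeriv (derivative F)).eval x := by
      conv_lhs => rw [hF]
      simp [eval_sub]
    rw [← sumIDeriv_derivative, hx]
    ring
  have cont : Continuous fun x : ℝ => Real.exp (-x) * F.eval x := by
    exact (Real.continuous_exp.comp continuous_neg).mul (Polynomial.continuous_aeval F)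
  have := intervalIntegral.integral_eq_sub_of_hasDerivAt
    (f := fun y => -(Real.exp (-y) * (sumIDeriv F).eval y))
    (f' := fun x => Real.exp (-x) * F.eval x)
    (fun x _ => key x) (cont.intervalIntegrable 0 t)
  rw [this]
  simp
  ring

lemma hermite_div (n : ℕ) (m : ℤ) :
    ∃ A B : ℤ, aeval (0:ℤ) (sumIDeriv (X ^ n * (C m - X) ^ n)) = (n ! : ℤ) * A ∧
               aeval m (sumIDeriv (X ^ n * (C m - X) ^ n)) = (n ! : ℤ) * B := by
  obtain ⟨gp, -, hgp⟩ := Polynomial.aeval_sumIDeriv ℤ (X ^ n * (C m - X) ^ n : ℤ[X]) n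
  have hmap : (X ^ n * (C m - X) ^ n : ℤ[X]).map (algebraMap ℤ ℤ) =
      X ^ n * (C m - X) ^ n := by
    rw [Algebra.algebraMap_self, Polynomial.map_id]
  refine ⟨aeval 0 gp, aeval m gp, ?_, ?_⟩
  · have h0 := hgp (0 : ℤ) (by rw [hmap, C_0, sub_zero]; exact dvd_mul_right _ _)
    simpa [nsmul_eq_mul] using h0
  · have hm := hgp m (by rw [hmap, show (C m - X : ℤ[X]) = -(X - C m) from by ring, neg_pow]; exact dvd_mul_of_dvd_right (dvd_mul_left _ _) _)
    simpa [nsmul_eq_mul] using hm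

lemma exp_nat_irrational (m : ℕ) (hm : 0 < m) : Irrational (Real.exp m) := by
  rintro ⟨q, hq⟩
  have hm0 : (0:ℝ) < m := by exact_mod_cast hm
  have hexpm : (0:ℝ) < Real.exp m := Real.exp_pos _
  set c : ℝ := (q.den : ℝ) * Real.exp m * m with hc
  have hden : (0:ℝ) < (q.den : ℝ) := by exact_mod_cast q.pos
  have hcpos : 0 < c := by positivity
  have htend := FloorSemiring.tendsto_pow_div_factorial_atTop (K := ℝ) ((m:ℝ)^2)
  obtain ⟨n, hn⟩ := (htend.eventually_lt_const (by positivity : (0:ℝ) < 1 / c)).exists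
  have hfacpos : (0:ℝ) < (n ! : ℝ) := by positivity
  have hkey : c * ((m:ℝ)^2)^n < (n ! : ℝ) := by
    rw [div_lt_div_iff₀ hfacpos hcpos] at hn
    linarith [hn]
  -- the polynomial
  set f : ℤ[X] := X ^ n * (C (m:ℤ) - X) ^ n with hfdef
  set F : ℝ[X] := f.map (Int.castRingHom ℝ) with hFdef
  have hF : F = X ^ n * (C (m:ℝ) - X) ^ n := by
    simp [hFdef, hfdef, Polynomial.map_mul, Polynomial.map_pow, Polynomial.map_sub]
  obtain ⟨A, B, hA, hB⟩ := hermite_div n (m:ℤ)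
  set G0 : ℝ := (sumIDeriv F).eval 0 with hG0def
  set Gm : ℝ := (sumIDeriv F).eval m with hGmdef
  have hsum : sumIDeriv F = (sumIDeriv f).map (Int.castRingHom ℝ) := by
    rw [hFdef, sumIDeriv_map]
  have hAe : (sumIDeriv f).eval (0:ℤ) = (n ! : ℤ) * A := by
    simpa [aeval_def, eval₂_eq_eval_map, Algebra.algebraMap_self, Polynomial.map_id, hfdef] using hA
  have hBe : (sumIDeriv f).eval ((m:ℤ)) = (n ! : ℤ) * B := by
    simpa [aeval_def, eval₂_eq_eval_map, Algebra.algebraMap_self, Polynomial.map_id, hfdef] using hB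
  have hG0 : G0 = (((n ! : ℤ) * A : ℤ) : ℝ) := by
    rw [hG0def, hsum, show (0:ℝ) = ((0:ℤ):ℝ) by norm_num, Polynomial.eval_intCast_map]
    simp [Int.cast_id, hAe]
  have hGm : Gm = (((n ! : ℤ) * B : ℤ) : ℝ) := by
    rw [hGmdef, hsum, show ((m:ℕ):ℝ) = (((m:ℕ):ℤ):ℝ) by push_cast; ring,
      Polynomial.eval_intCast_map]
    simp [Int.cast_id, hBe]
  set I : ℝ := ∫ x in (0:ℝ)..(m:ℝ), Real.exp (-x) * F.eval x with hIdef
  have hIeq : I = G0 - Real.exp (-(m:ℝ)) * Gm := hermite_integral_eq F m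
  have hFeval : ∀ x : ℝ, F.eval x = x ^ n * ((m:ℝ) - x) ^ n := by
    intro x; rw [hF]; simp
  have hcont : Continuous fun x : ℝ => Real.exp (-x) * F.eval x :=
    (Real.continuous_exp.comp continuous_neg).mul (Polynomial.continuous_aeval F)
  have hIpos : 0 < I := by
    refine intervalIntegral_pos_of_pos_on (hcont.intervalIntegrable 0 m) ?_ hm0
    intro x hx
    rw [hFeval]
    have h1 : 0 < x := hx.1
    have h2 : 0 < (m:ℝ) - x := by linarith [hx.2]
    positivity
  have hIle : I ≤ (m:ℝ) * ((m:ℝ)^2)^n := by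
    have hb : ∀ x ∈ Set.uIoc (0:ℝ) (m:ℝ), ‖Real.exp (-x) * F.eval x‖ ≤ ((m:ℝ)^2)^n := by
      intro x hx
      rw [Set.uIoc_of_le hm0.le] at hx
      obtain ⟨hx1, hx2⟩ := hx
      rw [hFeval]
      have h1 : 0 ≤ x := hx1.le
      have h2 : 0 ≤ (m:ℝ) - x := by linarith
      rw [Real.norm_eq_abs, abs_of_nonneg (by positivity)]
      have e1 : Real.exp (-x) ≤ 1 := Real.exp_le_one_iff.2 (by linarith)
      have e2 : x ^ n ≤ (m:ℝ) ^ n := pow_le_pow_left₀ h1 hx2 n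
      have e3 : ((m:ℝ) - x) ^ n ≤ (m:ℝ) ^ n := pow_le_pow_left₀ h2 (by linarith) n
      calc Real.exp (-x) * (x ^ n * ((m:ℝ) - x) ^ n)
          ≤ 1 * ((m:ℝ) ^ n * (m:ℝ) ^ n) := by
            apply mul_le_mul e1 (mul_le_mul e2 e3 (by positivity) (by positivity))
              (by positivity) zero_le_one
        _ = ((m:ℝ)^2)^n := by rw [one_mul, ← pow_add, ← pow_mul]; ring_nf
    have := intervalIntegral.norm_integral_le_of_norm_le_const hb
    rw [sub_zero] at this
    calc I ≤ ‖I‖ := le_abs_self I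
      _ ≤ ((m:ℝ)^2)^n * |(m:ℝ)| := this
      _ = (m:ℝ) * ((m:ℝ)^2)^n := by rw [abs_of_nonneg hm0.le]; ring
  -- combine
  have hexpinv : Real.exp (-(m:ℝ)) * Real.exp (m:ℝ) = 1 := by
    rw [← Real.exp_add]; simp
  have key : Real.exp m * I = Real.exp m * G0 - Gm := by
    rw [hIeq]
    calc Real.exp m * (G0 - Real.exp (-(m:ℝ)) * Gm)
        = Real.exp m * G0 - (Real.exp (-(m:ℝ)) * Real.exp (m:ℝ)) * Gm := by ring
      _ = Real.exp m * G0 - Gm := by rw [hexpinv, one_mul]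
  set N : ℤ := q.num * A - (q.den : ℤ) * B with hNdef
  have hqd : (q:ℝ) * (q.den:ℝ) = (q.num:ℝ) := by
    rw [Rat.cast_def]
    field_simp
  have hNval : (q.den:ℝ) * (Real.exp m * I) = (n ! : ℝ) * (N:ℝ) := by
    rw [key, mul_sub, ← hq]
    rw [hG0, hGm, hNdef]
    push_cast
    linear_combination ((n ! : ℝ) * (A:ℝ)) * hqd
  have hNpos : 0 < (N:ℝ) := by
    have hl : 0 < (q.den:ℝ) * (Real.exp m * I) := by positivity
    rw [hNval] at hl
    by_contra h
    push_neg at h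
    nlinarith
  have hN1 : (1:ℝ) ≤ (N:ℝ) := by exact_mod_cast (by exact_mod_cast hNpos : (0:ℤ) < N)
  have hge : (n ! : ℝ) ≤ (q.den:ℝ) * (Real.exp m * I) := by
    rw [hNval]
    nlinarith [hfacpos, hN1]
  have hlt : (q.den:ℝ) * (Real.exp m * I) < (n ! : ℝ) := by
    calc (q.den:ℝ) * (Real.exp m * I) ≤ (q.den:ℝ) * (Real.exp m * ((m:ℝ) * ((m:ℝ)^2)^n)) := by
          apply mul_le_mul_of_nonneg_left (mul_le_mul_of_nonneg_left hIle hexpm.le) hden.le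
      _ = c * ((m:ℝ)^2)^n := by rw [hc]; ring
      _ < (n ! : ℝ) := hkey
  linarith

theorem exp_rat_irrational (r : ℚ) (hr : r ≠ 0) : Irrational (Real.exp (r : ℝ)) := by
  have pos : ∀ s : ℚ, 0 < s → Irrational (Real.exp (s : ℝ)) := by
    intro s hs
    rintro ⟨q, hq⟩
    have hnum : 0 < s.num := Rat.num_pos.2 hs
    set m : ℕ := s.num.toNat with hmdef
    have hm0 : 0 < m := by omega
    have hmul : (s.den : ℝ) * (s : ℝ) = (m : ℝ) := by
      have h1 : ((m : ℕ) : ℝ) = (s.num : ℝ) := by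
        rw [hmdef]
        exact_mod_cast congrArg (Int.cast : ℤ → ℝ) (Int.toNat_of_nonneg hnum.le)
      rw [h1, Rat.cast_def]
      have hd : (s.den : ℝ) ≠ 0 := by positivity
      field_simp
    have key : Real.exp (m : ℝ) = ((q ^ s.den : ℚ) : ℝ) := by
      rw [← hmul, Real.exp_nat_mul, hq.symm]
      push_cast
      ring
    exact exp_nat_irrational m hm0 ⟨q ^ s.den, key.symm⟩
  rcases hr.lt_or_gt with h | h
  · rintro ⟨q, hq⟩
    have key : Real.exp ((-r : ℚ) : ℝ) = ((q⁻¹ : ℚ) : ℝ) := by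
      push_cast
      rw [Real.exp_neg, ← hq]
    exact pos (-r) (neg_pos.2 h) ⟨q⁻¹, key.symm⟩
  · exact pos r h
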